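/- In a finite DAG, every basis has cardinality at most the number of sources. Precisely: let V be a finite vertex set and E a directed edge relation on V whose transitive closure is irreflexive (so (V,E) is a finite DAG); then every basis B of (V,E) satisfies |B| ≤ |{S ∈ V : S is a source}|. -/
import Mathlib


/-- Two vertices are dependent if they share a common ancestor
(ancestorship via the reflexive-transitive closure of the edge relation). -/
def Dep {V : Type*} (E : V → V → Prop) (x y : V) : Prop :=
  ∃ a, Relation.ReflTransGen E a x ∧ Relation.ReflTransGen E a y

/-- A basis: a set of pairwise independent vertices such that every vertex
outside the set is dependent on some vertex of the set. -/
def IsBasis {V : Type*} (E : V → V → Prop) (B : Set V) : Prop :=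
  (∀ x ∈ B, ∀ y ∈ B, x ≠ y → ¬ Dep E x y) ∧ ∀ x ∉ B, ∃ b ∈ B, Dep E x b

lemma exists_source_ancestor {V : Type*} [Fintype V] (E : V → V → Prop)
    (hdag : Irreflexive (Relation.TransGen E)) (x : V) :
    ∃ s, Relation.ReflTransGen E s x ∧ ∀ A, ¬ E A s := by
  have hwf : WellFounded (Relation.TransGen E) :=
    @Finite.wellFounded_of_trans_of_irrefl _ _ _ ⟨fun _ _ _ => Relation.TransGen.trans⟩ ⟨hdag⟩
  induction x using hwf.induction with
  | _ x ih =>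
    by_cases hx : ∀ A, ¬ E A x
    · exact ⟨x, Relation.ReflTransGen.refl, hx⟩
    · push_neg at hx
      obtain ⟨A, hA⟩ := hx
      obtain ⟨s, hs1, hs2⟩ := ih A (Relation.TransGen.single hA)
      exact ⟨s, hs1.trans (Relation.ReflTransGen.single hA), hs2⟩

/-- In a finite DAG, every basis has cardinality at most the number of sources. -/
theorem basis_card_le_sources {V : Type*} [Fintype V] (E : V → V → Prop)
    (hdag : Irreflexive (Relation.TransGen E))
    (B : Set V) (hB : IsBasis E B) :
    B.ncard ≤ {S : V | ∀ A, ¬ E A S}.ncard := by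
  choose f hf1 hf2 using exists_source_ancestor E hdag
  refine Set.ncard_le_ncard_of_injOn f (fun b _ => hf2 b) ?_ (Set.toFinite _)
  intro b1 hb1 b2 hb2 heq
  by_contra hne
  exact hB.1 b1 hb1 b2 hb2 hne ⟨f b1, hf1 b1, heq ▸ hf1 b2⟩
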